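/- arXiv:1304.0800 — 2 statements merged into one kernel-verified Lean document; each statement's English description precedes it below -/
import Mathlib

section
/- Let p = 1, q = 0 (TASEP) and n ≥ 1. For all u, v ≥ 0 and all x, y ∈ X_{n−1}^+: Σ_{z ∈ X_{n−1}^+} p_n((0,x),(0,z); u) · p_n((0,z),(0,y); v) = p_n((0,x),(0,y); u+v). (Equivalently: because in TASEP a leftmost particle that starts at 0 and is at 0 at a later time was at 0 throughout, the transition probabilities pinned to have leftmost particle at 0 form a semigroup.) -/
open MeasureTheory Set
open scoped Classical
noncomputable section

/-- Configurations of `n` particles on `ℤ⁺`: strictly increasing `n`-tuples of naturals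
(`X_0` is a singleton). -/
def Conf (n : ℕ) : Type := {x : Fin n → ℕ // StrictMono x}

instance (n : ℕ) : DecidableEq (Conf n) := by unfold Conf; infer_instance

/-- `E_n = ℓ¹(X_n)`. -/
abbrev En (n : ℕ) : Type := lp (fun _ : Conf n => ℝ) 1

/-- Real-valued indicator of a proposition. -/
def ind (P : Prop) : ℝ := if P then 1 else 0

/-- Extension of a function on configurations to all tuples, by zero. -/
def extFun {n : ℕ} (u : Conf n → ℝ) (y : Fin n → ℕ) : ℝ :=
  if h : StrictMono y then u ⟨y, h⟩ else 0

/-- The tuple `x^{i,+}`. -/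
def up {n : ℕ} (x : Fin n → ℕ) (i : Fin n) : Fin n → ℕ := Function.update x i (x i + 1)

/-- The tuple `x^{i,-}`. -/
def down {n : ℕ} (x : Fin n → ℕ) (i : Fin n) : Fin n → ℕ := Function.update x i (x i - 1)

/-- `x^{i,+} ∈ X_n`. -/
def upOK {n : ℕ} (x : Fin n → ℕ) (i : Fin n) : Prop := StrictMono (up x i)

/-- `x^{i,-} ∈ X_n`: the particle at site `x i` can move left to a nonnegative site. -/
def downOK {n : ℕ} (x : Fin n → ℕ) (i : Fin n) : Prop := 0 < x i ∧ StrictMono (down x i)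

/-- The action of the `n`-particle ASEP generator on `ℤ⁺`. -/
def Qact (p q : ℝ) {n : ℕ} (u : Conf n → ℝ) (x : Conf n) : ℝ :=
  ∑ i : Fin n,
    (p * ind (downOK x.1 i) * extFun u (down x.1 i)
     + q * ind (upOK x.1 i) * extFun u (up x.1 i)
     - p * ind (upOK x.1 i) * u x
     - q * ind (downOK x.1 i) * u x)

/-- The action of `δ` (multiplication by the indicator of `x₁ = 0`; zero on `E₀`). -/
def Dact {n : ℕ} (u : Conf n → ℝ) (x : Conf n) : ℝ :=
  ind (∃ h : 0 < n, x.1 ⟨0, h⟩ = 0) * u x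

/-- Tail of a configuration. -/
def confTail {n : ℕ} (x : Conf (n+1)) : Conf n :=
  ⟨fun i => x.1 i.succ, fun _ _ h => x.2 (Fin.succ_lt_succ_iff.mpr h)⟩

/-- The action of `A_{n+1} : E_n → E_{n+1}`, `(A F)(x₁,…,x_{n+1}) = 1{x₁=0}·F(x₂,…,x_{n+1})`. -/
def Aact {n : ℕ} (F : Conf n → ℝ) (x : Conf (n+1)) : ℝ :=
  ind (x.1 0 = 0) * F (confTail x)

/-- The action of `B_n : E_{n+1} → E_n`, `(B F)(x₁,…,x_n) = 1{x₁>0}·F(0,x₁,…,x_n)`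
(for `n = 0`, `B₀ F = F(0)`). -/
def Bact {n : ℕ} (F : Conf (n+1) → ℝ) (x : Conf n) : ℝ :=
  ind (¬ ∃ h : 0 < n, x.1 ⟨0, h⟩ = 0) * extFun F (Fin.cons 0 x.1)

/-- Laplace transform `L(s) = ∫_0^∞ e^{-st} e^{tQ} dt` of the semigroup generated by `Q`. -/
def Lop {X : Type} [NormedAddCommGroup X] [NormedSpace ℝ X] [CompleteSpace X]
    (Q : X →L[ℝ] X) (s : ℝ) : X →L[ℝ] X :=
  ∫ t in Ioi (0:ℝ), Real.exp (-(s*t)) • NormedSpace.exp (t • Q)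

/-- The Bochner integral defining `L(s)` converges. -/
def LapConv {X : Type} [NormedAddCommGroup X] [NormedSpace ℝ X] [CompleteSpace X]
    (Q : X →L[ℝ] X) (s : ℝ) : Prop :=
  IntegrableOn (fun t => Real.exp (-(s*t)) • NormedSpace.exp (t • Q)) (Ioi (0:ℝ))


/-- Configurations with `x₁ > 0` (all of `X_0` when `n = 0`). -/
def ConfP (n : ℕ) : Type := {x : Conf n // ∀ h : 0 < n, 0 < x.1 ⟨0, h⟩}

instance (n : ℕ) : DecidableEq (ConfP n) := by unfold ConfP Conf; infer_instance

/-- The configuration `(0, x)` for `x ∈ X_n⁺`. -/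
def cons0 {n : ℕ} (x : ConfP n) : Conf (n+1) :=
  ⟨Fin.cons 0 x.1.1, by
    intro i j hij
    induction j using Fin.cases with
    | zero => exact absurd hij (Fin.not_lt_zero _).elim
    | succ j' =>
      induction i using Fin.cases with
      | zero =>
        simp only [Fin.cons_zero, Fin.cons_succ]
        exact lt_of_lt_of_le (x.2 j'.pos)
          (x.1.2.monotone (by simp [Fin.le_def]))
      | succ i' =>
        simp only [Fin.cons_succ]
        exact x.1.2 (by exact_mod_cast Fin.succ_lt_succ_iff.mp hij)⟩

/-- The transition probability `p_n(x, y; t) = (e^{tQ_n} δ_y)(x)` of `n`-particle ASEP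
on `ℤ⁺`. -/
def transProb {n : ℕ} (Q : En n →L[ℝ] En n) (t : ℝ) (x y : Conf n) : ℝ :=
  NormedSpace.exp (t • Q) (lp.single 1 y (1:ℝ)) x

namespace TasepAux

/-- Evaluation at a configuration, as a continuous linear functional on `ℓ¹`. -/
def evalCLM {n : ℕ} (c : Conf n) : En n →L[ℝ] ℝ :=
  LinearMap.mkContinuous
    { toFun := fun F => F c
      map_add' := fun F G => congrFun (lp.coeFn_add F G) c
      map_smul' := fun r F => congrFun (lp.coeFn_smul r F) c }
    1 (fun F => by
      rw [one_mul]
      exact lp.norm_apply_le_norm one_ne_zero F c)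

@[simp] lemma evalCLM_apply {n : ℕ} (c : Conf n) (F : En n) : evalCLM c F = F c := rfl

lemma cons0_zero {n : ℕ} (x : ConfP n) : (cons0 x).1 0 = 0 := by
  simp [cons0]

lemma cons0_injective {m : ℕ} : Function.Injective (cons0 (n := m)) := by
  intro z₁ z₂ h
  apply Subtype.ext; apply Subtype.ext; funext i
  have h2 := congrArg (fun w : Conf (m+1) => w.1 i.succ) h
  simpa [cons0] using h2

lemma mem_range_of_zero {m : ℕ} (w : Conf (m+1)) (hw : w.1 0 = 0) :
    w ∈ Set.range (cons0 (n := m)) := by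
  refine ⟨⟨confTail w, fun h => ?_⟩, ?_⟩
  · have h1 : w.1 0 < w.1 (Fin.succ ⟨0, h⟩) := w.2 (Fin.succ_pos _)
    rw [hw] at h1
    exact h1
  · apply Subtype.ext; funext i
    induction i using Fin.cases with
    | zero => simp [cons0, hw]
    | succ j => simp [cons0, confTail]

lemma Qact_vanish {n : ℕ} (F : Conf (n+1) → ℝ)
    (hF : ∀ c : Conf (n+1), c.1 0 = 0 → F c = 0)
    {c : Conf (n+1)} (hc : c.1 0 = 0) : Qact 1 0 F c = 0 := by
  unfold Qact
  refine Finset.sum_eq_zero fun i _ => ?_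
  rw [hF c hc]
  simp only [zero_mul, one_mul, mul_zero, add_zero, sub_zero, zero_add]
  by_cases hd : downOK c.1 i
  · have hi0 : i ≠ 0 := by
      rintro rfl
      have h5 : 0 < c.1 0 := hd.1
      rw [hc] at h5
      exact lt_irrefl 0 h5
    have h0 : down c.1 i 0 = 0 := by
      unfold down
      rw [Function.update_of_ne (Ne.symm hi0)]
      exact hc
    unfold extFun
    split
    · next h => rw [hF ⟨down c.1 i, h⟩ h0, mul_zero]
    · rw [mul_zero]
  · simp [ind, hd]

lemma exp_vanish {m : ℕ} (Q : En (m+1) →L[ℝ] En (m+1))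
    (hQ : ∀ (u : En (m+1)) (x : Conf (m+1)), Q u x = Qact 1 0 (fun z => u z) x)
    (t : ℝ) (F : En (m+1)) (hF : ∀ c : Conf (m+1), c.1 0 = 0 → F c = 0)
    {c : Conf (m+1)} (hc : c.1 0 = 0) :
    (NormedSpace.exp (t • Q)) F c = 0 := by
  have hpow : ∀ k : ℕ, ∀ d : Conf (m+1), d.1 0 = 0 → (((t • Q) ^ k) F) d = 0 := by
    intro k
    induction k with
    | zero => intro d hd; simpa using hF d hd
    | succ k ih =>
      intro d hd
      rw [pow_succ', ContinuousLinearMap.mul_apply, ContinuousLinearMap.smul_apply]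
      have h1 : (t • (Q (((t • Q) ^ k) F))) d = t • ((Q (((t • Q) ^ k) F)) d) :=
        congrFun (lp.coeFn_smul t _) d
      rw [h1, hQ, Qact_vanish _ ih hd, smul_zero]
  let Φ : (En (m+1) →L[ℝ] En (m+1)) →L[ℝ] ℝ :=
    (evalCLM c).comp ((ContinuousLinearMap.apply ℝ (En (m+1))) F)
  have hΦ : ∀ T : En (m+1) →L[ℝ] En (m+1), Φ T = T F c := fun T => rfl
  have hsum : Summable fun k : ℕ => (Nat.factorial k : ℝ)⁻¹ • (t • Q) ^ k :=
    NormedSpace.expSeries_summable' (𝕂 := ℝ) (t • Q)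
  have hexp : (NormedSpace.exp (t • Q)) F c = Φ (NormedSpace.exp (t • Q)) := rfl
  rw [hexp, NormedSpace.exp_eq_tsum ℝ, Φ.map_tsum hsum]
  have hterm : ∀ k : ℕ, Φ ((Nat.factorial k : ℝ)⁻¹ • (t • Q) ^ k) = 0 := by
    intro k
    rw [Φ.map_smul, hΦ, hpow k c hc, smul_zero]
  simp only [hterm, tsum_zero]

end TasepAux

open TasepAux

set_option maxHeartbeats 1000000 in
set_option synthInstance.maxHeartbeats 400000 in
lemma tasep_main (m : ℕ)
    (Q : En (m+1) →L[ℝ] En (m+1))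
    (hQ : ∀ (u : En (m+1)) (x : Conf (m+1)), Q u x = Qact 1 0 (fun z => u z) x)
    (u v : ℝ) (x y : ConfP m) :
    ∑' z : ConfP m,
        transProb Q u (cons0 x) (cons0 z) * transProb Q v (cons0 z) (cons0 y)
      = transProb Q (u + v) (cons0 x) (cons0 y) := by
  classical
  set G : En (m+1) := NormedSpace.exp (v • Q) (lp.single 1 (cons0 y) (1:ℝ)) with hG
  have hb : HasSum (fun w : Conf (m+1) => lp.single 1 w (G w)) G :=
    lp.hasSum_single ENNReal.one_ne_top G
  set Ψ : En (m+1) →L[ℝ] ℝ :=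
    (evalCLM (cons0 x)).comp (NormedSpace.exp (u • Q)) with hΨdef
  have h2 := hb.mapL Ψ
  have hcomm : Commute (u • Q) (v • Q) := ((Commute.refl Q).smul_left u).smul_right v
  have hΨG : Ψ G = transProb Q (u + v) (cons0 x) (cons0 y) := by
    show (NormedSpace.exp (u • Q)) ((NormedSpace.exp (v • Q)) (lp.single 1 (cons0 y) 1))
        (cons0 x) = _
    have hmul : NormedSpace.exp ((u + v) • Q)
        = NormedSpace.exp (u • Q) * NormedSpace.exp (v • Q) := by
      rw [add_smul]; exact NormedSpace.exp_add_of_commute_of_mem_ball (𝕂 := ℝ) hcomm ((NormedSpace.expSeries_radius_eq_top ℝ (En (m+1) →L[ℝ] En (m+1))).symm ▸ edist_lt_top _ _) ((NormedSpace.expSeries_radius_eq_top ℝ (En (m+1) →L[ℝ] En (m+1))).symm ▸ edist_lt_top _ _)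
    unfold transProb
    rw [hmul, ContinuousLinearMap.mul_apply]
  have hterm : ∀ w : Conf (m+1),
      Ψ (lp.single 1 w (G w))
        = transProb Q u (cons0 x) w * transProb Q v w (cons0 y) := by
    intro w
    have h1 : lp.single (E := fun _ : Conf (m+1) => ℝ) 1 w (G w)
        = (G w) • lp.single 1 w (1:ℝ) := by
      rw [← lp.single_smul, smul_eq_mul, mul_one]
    rw [h1, _root_.map_smul]
    have h3 : Ψ (lp.single 1 w (1:ℝ)) = transProb Q u (cons0 x) w := rfl
    have h4 : G w = transProb Q v w (cons0 y) := rfl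
    rw [h3, smul_eq_mul, ← h4, mul_comm]
  simp only [hterm] at h2
  rw [hΨG] at h2
  have hvan : ∀ w : Conf (m+1), w ∉ Set.range (cons0 (n := m)) →
      transProb Q u (cons0 x) w * transProb Q v w (cons0 y) = 0 := by
    intro w hw
    have hw0 : w.1 0 ≠ 0 := fun h => hw (mem_range_of_zero w h)
    have hz : transProb Q u (cons0 x) w = 0 := by
      unfold transProb
      refine exp_vanish Q hQ u _ ?_ (cons0_zero x)
      intro d hd
      exact lp.single_apply_ne (E := fun _ : Conf (m+1) => ℝ) 1 w (1:ℝ) (fun h => hw0 (by rw [← h]; exact hd))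
    rw [hz, zero_mul]
  have h4 := (Function.Injective.hasSum_iff cons0_injective hvan).mpr h2
  exact h4.tsum_eq

/-- The semigroup property, in TASEP (`p = 1`, `q = 0`), of the transition probabilities
pinned to have leftmost particle at `0`:  for `u, v ≥ 0` and `x, y ∈ X_{n-1}⁺` (here
`n = m+1 ≥ 1`),
`Σ_{z ∈ X_{n-1}⁺} p_n((0,x),(0,z);u) p_n((0,z),(0,y);v) = p_n((0,x),(0,y);u+v)`. -/
theorem tasep_pinned_semigroup (m : ℕ)
    (Q : En (m+1) →L[ℝ] En (m+1))
    (hQ : ∀ (u : En (m+1)) (x : Conf (m+1)), Q u x = Qact 1 0 (fun z => u z) x)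
    (u v : ℝ) (hu : 0 ≤ u) (hv : 0 ≤ v) (x y : ConfP m) :
    ∑' z : ConfP m,
        transProb Q u (cons0 x) (cons0 z) * transProb Q v (cons0 z) (cons0 y)
      = transProb Q (u + v) (cons0 x) (cons0 y) :=
  tasep_main m Q hQ u v x y
end
end

section
/- Let p = 1, q = 0 (TASEP), n ≥ 0 and α > 0. There exists s₀ ≥ α such that for every real s > s₀ the operator I − α L_n^0(s) is boundedly invertible on ℓ¹(X_n^+) and (I − α L_n^0(s))^{−1} = I + α L_n^0(s − α). -/
open MeasureTheory Set
open scoped Classical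
set_option maxHeartbeats 1000000
set_option synthInstance.maxHeartbeats 1000000
noncomputable section

section Gen
variable {X : Type} [NormedAddCommGroup X] [NormedSpace ℝ X] [CompleteSpace X]

lemma opNorm_pow_le (Q : X →L[ℝ] X) : ∀ k : ℕ, ‖Q ^ k‖ ≤ ‖Q‖ ^ k
  | 0 => by
      simpa [pow_zero, ContinuousLinearMap.one_def] using
        (ContinuousLinearMap.norm_id_le : ‖ContinuousLinearMap.id ℝ X‖ ≤ 1)
  | (k+1) => by
      calc ‖Q ^ (k+1)‖ = ‖Q ^ k * Q‖ := by rw [pow_succ]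
        _ ≤ ‖Q ^ k‖ * ‖Q‖ := norm_mul_le _ _
        _ ≤ ‖Q‖ ^ k * ‖Q‖ := by
            have := opNorm_pow_le Q k
            exact mul_le_mul_of_nonneg_right this (norm_nonneg Q)
        _ = ‖Q‖ ^ (k+1) := (pow_succ _ _).symm

lemma norm_exp_op_le (A : X →L[ℝ] X) : ‖NormedSpace.exp A‖ ≤ Real.exp ‖A‖ := by
  rw [NormedSpace.exp_eq_tsum ℝ]
  have h1 : ‖∑' n : ℕ, ((Nat.factorial n : ℝ)⁻¹) • A ^ n‖ ≤ ∑' n : ℕ, ‖((Nat.factorial n : ℝ)⁻¹) • A ^ n‖ :=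
    norm_tsum_le_tsum_norm (NormedSpace.norm_expSeries_summable' A)
  refine h1.trans ?_
  have h2 : ∑' n : ℕ, ‖((Nat.factorial n : ℝ)⁻¹) • A ^ n‖ ≤ ∑' n : ℕ, ‖A‖ ^ n / (Nat.factorial n : ℝ) := by
    refine Summable.tsum_le_tsum (fun n => ?_) (NormedSpace.norm_expSeries_summable' A)
      (Real.summable_pow_div_factorial _)
    rw [norm_smul ((Nat.factorial n : ℝ)⁻¹) (A ^ n), Real.norm_eq_abs, abs_of_nonneg (inv_nonneg.2 (Nat.cast_nonneg _)), div_eq_inv_mul]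
    exact mul_le_mul_of_nonneg_left (opNorm_pow_le A n) (inv_nonneg.2 (Nat.cast_nonneg _))
  refine h2.trans_eq ?_
  rw [Real.exp_eq_exp_ℝ, NormedSpace.exp_eq_tsum_div]

lemma scalar_int {s : ℝ} (hs : 0 < s) (k : ℕ) :
    IntegrableOn (fun t => Real.exp (-(s*t)) * ((Nat.factorial k : ℝ)⁻¹ * t ^ k)) (Ioi (0:ℝ)) := by
  have h := (integrableOn_rpow_mul_exp_neg_mul_rpow
    (s := (k:ℝ)) (p := 1) (b := s) (lt_of_lt_of_le neg_one_lt_zero (Nat.cast_nonneg k)) zero_lt_one hs).const_mul ((Nat.factorial k : ℝ)⁻¹)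
  have he : (fun t : ℝ => Real.exp (-(s*t)) * ((Nat.factorial k : ℝ)⁻¹ * t ^ k))
      = fun x : ℝ => (Nat.factorial k : ℝ)⁻¹ * (x ^ (k:ℝ) * Real.exp (-s * x ^ (1:ℝ))) := by
    funext t
    rw [Real.rpow_one, Real.rpow_natCast, neg_mul]
    ring
  rw [he]
  exact h

lemma scalar_val {s : ℝ} (hs : 0 < s) (k : ℕ) :
    ∫ t in Ioi (0:ℝ), Real.exp (-(s*t)) * ((Nat.factorial k : ℝ)⁻¹ * t ^ k) = (s⁻¹) ^ (k+1) := by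
  have he : (fun t : ℝ => Real.exp (-(s*t)) * ((Nat.factorial k : ℝ)⁻¹ * t ^ k))
      = fun t : ℝ => (Nat.factorial k : ℝ)⁻¹ * (t ^ (((k:ℝ)+1) - 1) * Real.exp (-(s*t))) := by
    funext t
    rw [add_sub_cancel_right, Real.rpow_natCast]
    ring
  rw [he, MeasureTheory.integral_const_mul,
    Real.integral_rpow_mul_exp_neg_mul_Ioi (by positivity) hs]
  have hg : Real.Gamma ((k:ℝ)+1) = (Nat.factorial k : ℝ) := Real.Gamma_nat_eq_factorial k
  rw [hg]
  have hr : ((1:ℝ)/s) ^ ((k:ℝ)+1) = (s⁻¹) ^ (k+1) := by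
    rw [one_div]
    rw [show ((k:ℝ)+1) = ((k+1 : ℕ) : ℝ) by push_cast; ring, Real.rpow_natCast]
  rw [hr]
  have : (Nat.factorial k : ℝ) ≠ 0 := by positivity
  field_simp

end Gen

section Gen2
variable {X : Type} [NormedAddCommGroup X] [NormedSpace ℝ X] [CompleteSpace X]

lemma hasSum_Lop (Q : X →L[ℝ] X) {s : ℝ} (hs : ‖Q‖ < s) :
    HasSum (fun k : ℕ => (s⁻¹) ^ (k+1) • Q ^ k) (Lop Q s) := by
  have hs0 : 0 < s := lt_of_le_of_lt (norm_nonneg Q) hs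
  set F : ℕ → ℝ → (X →L[ℝ] X) :=
    fun k t => (Real.exp (-(s*t)) * ((Nat.factorial k : ℝ)⁻¹ * t ^ k)) • Q ^ k with hF
  have hF_int : ∀ k, Integrable (F k) (volume.restrict (Ioi (0:ℝ))) := fun k =>
    (scalar_int hs0 k).smul_const (Q ^ k)
  have hval : ∀ k, ∫ t in Ioi (0:ℝ), F k t = (s⁻¹) ^ (k+1) • Q ^ k := by
    intro k
    simp only [hF]
    rw [integral_smul_const, scalar_val hs0 k]
  have hnorm : ∀ k, (∫ t in Ioi (0:ℝ), ‖F k t‖) ≤ (s⁻¹) ^ (k+1) * ‖Q‖ ^ k := by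
    intro k
    have h1 : ∀ t ∈ Ioi (0:ℝ), ‖F k t‖
        ≤ (Real.exp (-(s*t)) * ((Nat.factorial k : ℝ)⁻¹ * t ^ k)) * ‖Q‖ ^ k := by
      intro t ht
      simp only [hF]
      rw [norm_smul (Real.exp (-(s*t)) * ((Nat.factorial k : ℝ)⁻¹ * t ^ k)) (Q ^ k), Real.norm_eq_abs,
        abs_of_nonneg (mul_nonneg (Real.exp_nonneg _) (mul_nonneg (inv_nonneg.2 (Nat.cast_nonneg _)) (pow_nonneg (le_of_lt ht) k)))]
      exact mul_le_mul_of_nonneg_left (opNorm_pow_le Q k) (mul_nonneg (Real.exp_nonneg _) (mul_nonneg (inv_nonneg.2 (Nat.cast_nonneg _)) (pow_nonneg (le_of_lt ht) k)))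
    have h2 : (∫ t in Ioi (0:ℝ), ‖F k t‖)
        ≤ ∫ t in Ioi (0:ℝ), (Real.exp (-(s*t)) * ((Nat.factorial k : ℝ)⁻¹ * t ^ k)) * ‖Q‖ ^ k := by
      refine setIntegral_mono_on (hF_int k).norm ((scalar_int hs0 k).mul_const _)
        measurableSet_Ioi h1
    refine h2.trans_eq ?_
    rw [MeasureTheory.integral_mul_const, scalar_val hs0 k]
  have hF_sum : Summable fun k => ∫ t in Ioi (0:ℝ), ‖F k t‖ := by
    refine Summable.of_nonneg_of_le
      (fun k => integral_nonneg (fun t => norm_nonneg _)) hnorm ?_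
    have hgeom : Summable (fun k : ℕ => s⁻¹ * (s⁻¹ * ‖Q‖) ^ k) := by
      refine Summable.mul_left _ (summable_geometric_of_lt_one (by positivity) ?_)
      rw [← div_eq_inv_mul]
      exact (div_lt_one hs0).2 hs
    refine hgeom.congr fun k => ?_
    rw [mul_pow, pow_succ']
    ring
  have hmain := MeasureTheory.hasSum_integral_of_summable_integral_norm hF_int hF_sum
  have hpt : ∀ t : ℝ, (∑' k, F k t) = Real.exp (-(s*t)) • NormedSpace.exp (t • Q) := by
    intro t
    rw [NormedSpace.exp_eq_tsum ℝ,
      ← Summable.tsum_const_smul (Real.exp (-(s*t))) (NormedSpace.expSeries_summable' (t • Q))]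
    congr 1
    funext k
    rw [hF, smul_pow, smul_smul, smul_smul]
    congr 1
    ring
  have : (∫ t in Ioi (0:ℝ), ∑' k, F k t) = Lop Q s := by
    rw [Lop]
    congr 1
    funext t
    exact hpt t
  rw [this] at hmain
  have : (fun k => ∫ t in Ioi (0:ℝ), F k t) = fun k => (s⁻¹) ^ (k+1) • Q ^ k := funext hval
  rwa [this] at hmain

lemma lapConv_of_norm_lt (Q : X →L[ℝ] X) {s : ℝ} (hs : ‖Q‖ < s) : LapConv Q s := by
  have hc : Continuous fun t : ℝ => Real.exp (-(s*t)) • NormedSpace.exp (t • Q) := by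
    have h1 : Continuous fun t : ℝ => t • Q := continuous_id.smul continuous_const
    exact (Real.continuous_exp.comp (by continuity)).smul
      ((continuous_iff_continuousAt.2 fun x => (NormedSpace.exp_analytic (𝕂 := ℝ) x).continuousAt).comp h1)
  refine (MeasureTheory.Integrable.mono' (exp_neg_integrableOn_Ioi 0 (by linarith : 0 < s - ‖Q‖))
    hc.aestronglyMeasurable ?_)
  filter_upwards [ae_restrict_mem measurableSet_Ioi] with t ht
  rw [norm_smul (Real.exp (-(s*t))) (NormedSpace.exp (t • Q)), Real.norm_eq_abs, abs_of_nonneg (Real.exp_nonneg _)]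
  have h1 : ‖NormedSpace.exp (t • Q)‖ ≤ Real.exp (t * ‖Q‖) := by
    refine (norm_exp_op_le (t • Q)).trans_eq ?_
    rw [norm_smul t Q, Real.norm_eq_abs, abs_of_nonneg (le_of_lt ht)]
  calc Real.exp (-(s*t)) * ‖NormedSpace.exp (t • Q)‖
      ≤ Real.exp (-(s*t)) * Real.exp (t * ‖Q‖) :=
        mul_le_mul_of_nonneg_left h1 (Real.exp_nonneg _)
    _ = Real.exp (-(s - ‖Q‖) * t) := by rw [← Real.exp_add]; ring_nf
end Gen2

section Gen3
variable {X : Type} [NormedAddCommGroup X] [NormedSpace ℝ X] [CompleteSpace X]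

/-- The resolvent as a Neumann series. -/
def Rop (Q : X →L[ℝ] X) (s : ℝ) : X →L[ℝ] X := ∑' k : ℕ, (s⁻¹) ^ (k+1) • Q ^ k

lemma Rop_eq_Lop (Q : X →L[ℝ] X) {s : ℝ} (hs : ‖Q‖ < s) : Rop Q s = Lop Q s :=
  (hasSum_Lop Q hs).tsum_eq

lemma Rop_geom (Q : X →L[ℝ] X) {s : ℝ} (hs : ‖Q‖ < s) :
    Rop Q s = s⁻¹ • ∑' k : ℕ, (s⁻¹ • Q) ^ k := by
  have hs0 : 0 < s := lt_of_le_of_lt (norm_nonneg Q) hs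
  have hx : ‖s⁻¹ • Q‖ < 1 := by
    rw [norm_smul (s⁻¹) Q, Real.norm_eq_abs, abs_of_pos (inv_pos.2 hs0), ← div_eq_inv_mul]
    exact (div_lt_one hs0).2 hs
  rw [Rop, ← Summable.tsum_const_smul (s⁻¹) (summable_geometric_of_norm_lt_one hx)]
  congr 1
  funext k
  rw [smul_pow, smul_smul, pow_succ']

lemma norm_smul_inv_lt (Q : X →L[ℝ] X) {s : ℝ} (hs : ‖Q‖ < s) : ‖s⁻¹ • Q‖ < 1 := by
  have hs0 : 0 < s := lt_of_le_of_lt (norm_nonneg Q) hs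
  rw [norm_smul (s⁻¹) Q, Real.norm_eq_abs, abs_of_pos (inv_pos.2 hs0), ← div_eq_inv_mul]
  exact (div_lt_one hs0).2 hs

lemma smul_one_sub (Q : X →L[ℝ] X) {s : ℝ} (hs0 : 0 < s) :
    s • (1:X →L[ℝ] X) - Q = s • ((1:X →L[ℝ] X) - s⁻¹ • Q) := by
  rw [smul_sub, smul_inv_smul₀ hs0.ne']

lemma unit_mul_Rop (Q : X →L[ℝ] X) {s : ℝ} (hs : ‖Q‖ < s) :
    (s • (1:X →L[ℝ] X) - Q) * Rop Q s = 1 := by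
  have hs0 : 0 < s := lt_of_le_of_lt (norm_nonneg Q) hs
  rw [Rop_geom Q hs, smul_one_sub Q hs0, smul_mul_assoc, mul_smul_comm, smul_smul,
    mul_inv_cancel₀ hs0.ne', one_smul, mul_neg_geom_series _ (norm_smul_inv_lt Q hs)]

lemma Rop_mul_unit (Q : X →L[ℝ] X) {s : ℝ} (hs : ‖Q‖ < s) :
    Rop Q s * (s • (1:X →L[ℝ] X) - Q) = 1 := by
  have hs0 : 0 < s := lt_of_le_of_lt (norm_nonneg Q) hs
  rw [Rop_geom Q hs, smul_one_sub Q hs0, smul_mul_assoc, mul_smul_comm, smul_smul,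
    inv_mul_cancel₀ hs0.ne', one_smul, geom_series_mul_neg _ (norm_smul_inv_lt Q hs)]

lemma Rop_sub (Q : X →L[ℝ] X) {s s' : ℝ} (hs : ‖Q‖ < s) (hs' : ‖Q‖ < s') :
    Rop Q s - Rop Q s' = (s' - s) • (Rop Q s * Rop Q s') := by
  have hd : (s' • (1:X →L[ℝ] X) - Q) - (s • (1:X →L[ℝ] X) - Q) = (s' - s) • 1 := by
    rw [sub_smul]; abel
  calc Rop Q s - Rop Q s'
      = Rop Q s * ((s' • (1:X →L[ℝ] X) - Q) * Rop Q s')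
        - (Rop Q s * (s • (1:X →L[ℝ] X) - Q)) * Rop Q s' := by
        rw [unit_mul_Rop Q hs', Rop_mul_unit Q hs, mul_one, one_mul]
    _ = (Rop Q s * (s' • (1:X →L[ℝ] X) - Q)) * Rop Q s'
        - (Rop Q s * (s • (1:X →L[ℝ] X) - Q)) * Rop Q s' := by rw [← mul_assoc]
    _ = (Rop Q s * ((s' • (1:X →L[ℝ] X) - Q) - (s • (1:X →L[ℝ] X) - Q))) * Rop Q s' := by
        rw [← sub_mul, ← mul_sub]
    _ = (s' - s) • (Rop Q s * Rop Q s') := by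
        rw [hd, mul_smul_comm, mul_one, smul_mul_assoc]

lemma Rop_sub' (Q : X →L[ℝ] X) {s s' : ℝ} (hs : ‖Q‖ < s) (hs' : ‖Q‖ < s') :
    Rop Q s - Rop Q s' = (s' - s) • (Rop Q s' * Rop Q s) := by
  have hd : (s' • (1:X →L[ℝ] X) - Q) - (s • (1:X →L[ℝ] X) - Q) = (s' - s) • 1 := by
    rw [sub_smul]; abel
  calc Rop Q s - Rop Q s'
      = (Rop Q s' * (s' • (1:X →L[ℝ] X) - Q)) * Rop Q s
        - Rop Q s' * ((s • (1:X →L[ℝ] X) - Q) * Rop Q s) := by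
        rw [Rop_mul_unit Q hs', unit_mul_Rop Q hs, mul_one, one_mul]
    _ = Rop Q s' * ((s' • (1:X →L[ℝ] X) - Q) * Rop Q s)
        - Rop Q s' * ((s • (1:X →L[ℝ] X) - Q) * Rop Q s) := by rw [mul_assoc]
    _ = Rop Q s' * (((s' • (1:X →L[ℝ] X) - Q) - (s • (1:X →L[ℝ] X) - Q)) * Rop Q s) := by
        rw [← mul_sub, ← sub_mul]
    _ = (s' - s) • (Rop Q s' * Rop Q s) := by
        rw [hd, smul_mul_assoc, one_mul, mul_smul_comm]
end Gen3


/-- `ℓ¹(X_n⁺)`. -/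
abbrev Ep (n : ℕ) : Type := lp (fun _ : ConfP n => ℝ) 1

section LpAux

lemma memℓp_one_iff {ι : Type*} {f : ι → ℝ} : Memℓp f 1 ↔ Summable (fun i => ‖f i‖) := by
  rw [memℓp_gen_iff (by norm_num : (0:ℝ) < (1:ENNReal).toReal)]
  simp only [ENNReal.toReal_one, Real.rpow_one]

lemma norm_lp_one {ι : Type*} (f : lp (fun _ : ι => ℝ) 1) : ‖f‖ = ∑' i, ‖f i‖ := by
  rw [lp.norm_eq_tsum_rpow (by norm_num : (0:ℝ) < (1:ENNReal).toReal) f]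
  simp only [ENNReal.toReal_one, Real.rpow_one, one_div, inv_one]

/-- Evaluation at a point as a continuous linear functional on `ℓ¹`. -/
def evalCLM {ι : Type} (x : ι) : lp (fun _ : ι => ℝ) 1 →L[ℝ] ℝ :=
  LinearMap.mkContinuous
    { toFun := fun f => f x
      map_add' := fun f g => by simp [lp.coeFn_add]
      map_smul' := fun c f => by simp [lp.coeFn_smul] }
    1 (fun f => by rw [one_mul]; exact lp.norm_apply_le_norm one_ne_zero f x)

@[simp] lemma evalCLM_apply {ι : Type} (x : ι) (f : lp (fun _ : ι => ℝ) 1) :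
    evalCLM x f = f x := rfl

end LpAux

section ConsTail

variable {n : ℕ}

lemma cons0_val_zero (x : ConfP n) : (cons0 x).1 0 = 0 := rfl

lemma cons0_val_succ (x : ConfP n) (i : Fin n) : (cons0 x).1 i.succ = x.1.1 i := by
  simp [cons0]

/-- The tail of a configuration starting at `0`, as an element of `X_n⁺`. -/
def tail0 (z : Conf (n+1)) (hz : z.1 0 = 0) : ConfP n :=
  ⟨confTail z, fun h => by
    have h1 : z.1 0 < z.1 (Fin.succ ⟨0, h⟩) := z.2 (Fin.succ_pos _)
    rw [hz] at h1
    exact h1⟩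

lemma cons0_tail0 (z : Conf (n+1)) (hz : z.1 0 = 0) : cons0 (tail0 z hz) = z := by
  apply Subtype.ext
  funext i
  induction i using Fin.cases with
  | zero => simpa [cons0, tail0, confTail] using hz.symm
  | succ j => simp [cons0, tail0, confTail]

lemma tail0_cons0 (x : ConfP n) (h : (cons0 x).1 0 = 0) : tail0 (cons0 x) h = x := by
  apply Subtype.ext
  apply Subtype.ext
  funext i
  simp [tail0, confTail, cons0]

lemma cons0_injective : Function.Injective (cons0 (n := n)) := by
  intro x y h
  apply Subtype.ext
  apply Subtype.ext
  funext i
  have h2 := congrArg (fun z : Conf (n+1) => z.1 i.succ) h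
  simpa [cons0] using h2

lemma mem_range_cons0 {z : Conf (n+1)} (hz : z.1 0 = 0) : z ∈ Set.range (cons0 (n := n)) :=
  ⟨tail0 z hz, cons0_tail0 z hz⟩

end ConsTail

section PiJ

variable {n : ℕ}

/-- Restriction `ℓ¹(X_{n+1}) → ℓ¹(X_n⁺)` along `x ↦ (0,x)`. -/
def piCLM : En (n+1) →L[ℝ] Ep n :=
  LinearMap.mkContinuous
    { toFun := fun v => (⟨fun x => v (cons0 x), by
        refine memℓp_one_iff.2 ?_
        exact (memℓp_one_iff.1 (lp.memℓp v)).comp_injective cons0_injective⟩ : Ep n)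
      map_add' := fun u v => by
        apply lp.ext
        funext x
        simp [lp.coeFn_add]
        rfl
      map_smul' := fun c v => by
        apply lp.ext
        funext x
        simp [lp.coeFn_smul] }
    1 (fun v => by
        rw [one_mul, norm_lp_one, norm_lp_one]
        refine Summable.tsum_le_tsum_of_inj cons0 cons0_injective
          (fun z _ => norm_nonneg _) (fun x => le_rfl)
          ((memℓp_one_iff.1 (lp.memℓp v)).comp_injective cons0_injective)
          (memℓp_one_iff.1 (lp.memℓp v)))

@[simp] lemma piCLM_apply (v : En (n+1)) (x : ConfP n) : piCLM v x = v (cons0 x) := rfl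

/-- The function underlying the embedding `ℓ¹(X_n⁺) → ℓ¹(X_{n+1})`. -/
def jFun (u : Ep n) : Conf (n+1) → ℝ :=
  fun z => if hz : z.1 0 = 0 then u (tail0 z hz) else 0

lemma jFun_cons0 (u : Ep n) (x : ConfP n) : jFun u (cons0 x) = u x := by
  rw [jFun, dif_pos (cons0_val_zero x), tail0_cons0]

lemma jFun_zero (u : Ep n) {z : Conf (n+1)} (hz : ¬ z.1 0 = 0) : jFun u z = 0 := by
  rw [jFun, dif_neg hz]

lemma jFun_norm_comp (u : Ep n) :
    (fun x : ConfP n => ‖jFun u (cons0 x)‖) = fun x => ‖u x‖ := by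
  funext x
  rw [jFun_cons0]

lemma jFun_norm_support (u : Ep n) :
    ∀ z ∉ Set.range (cons0 (n := n)), ‖jFun u z‖ = 0 := by
  intro z hz
  rw [jFun_zero u (fun h0 => hz (mem_range_cons0 h0)), norm_zero]

lemma jFun_memℓp (u : Ep n) : Memℓp (jFun u) 1 := by
  refine memℓp_one_iff.2 ?_
  refine (cons0_injective.summable_iff (jFun_norm_support u)).1 ?_
  have := memℓp_one_iff.1 (lp.memℓp u)
  rw [show ((fun z => ‖jFun u z‖) ∘ cons0) = fun x : ConfP n => ‖jFun u (cons0 x)‖ from rfl,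
    jFun_norm_comp]
  exact this

lemma jFun_tsum_norm (u : Ep n) : ∑' z, ‖jFun u z‖ = ∑' x, ‖u x‖ := by
  rw [← cons0_injective.tsum_eq (f := fun z => ‖jFun u z‖)
    (fun z hz => by
      by_contra hr
      exact hz (jFun_norm_support u z hr))]
  exact tsum_congr fun x => by rw [jFun_cons0]

/-- The embedding `ℓ¹(X_n⁺) → ℓ¹(X_{n+1})`, extending by zero along `x ↦ (0,x)`. -/
def jCLM : Ep n →L[ℝ] En (n+1) :=
  LinearMap.mkContinuous
    { toFun := fun u => (⟨jFun u, jFun_memℓp u⟩ : En (n+1))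
      map_add' := fun u v => by
        apply lp.ext
        funext z
        show jFun (u + v) z = jFun u z + jFun v z
        by_cases hz : z.1 0 = 0 <;>
          simp [jFun, hz, lp.coeFn_add]
      map_smul' := fun c u => by
        apply lp.ext
        funext z
        by_cases hz : z.1 0 = 0 <;>
          simp [jFun, hz, lp.coeFn_smul] }
    1 (fun u => by
        rw [one_mul, norm_lp_one, norm_lp_one]
        exact le_of_eq (jFun_tsum_norm u))

@[simp] lemma jCLM_apply (u : Ep n) (z : Conf (n+1)) : jCLM u z = jFun u z := rfl

end PiJ


section Pres

variable {n : ℕ}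

/-- With `p = 1`, `q = 0`, the generator preserves vanishing on `{z : z₁ = 0}`. -/
lemma Qact_pres (Q : En (n+1) →L[ℝ] En (n+1))
    (hQ : ∀ (u : En (n+1)) (x : Conf (n+1)), Q u x = Qact 1 0 (fun z => u z) x)
    (u : En (n+1)) (hu : ∀ z : Conf (n+1), z.1 0 = 0 → u z = 0) :
    ∀ z : Conf (n+1), z.1 0 = 0 → Q u z = 0 := by
  intro z hz
  rw [hQ, Qact]
  refine Finset.sum_eq_zero fun i _ => ?_
  rw [hu z hz]
  simp only [one_mul, zero_mul, mul_zero, add_zero, sub_zero]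
  by_cases hi : i = 0
  · subst hi
    have hd : ¬ downOK z.1 0 := fun h => by
      have h1 := h.1
      rw [hz] at h1
      exact lt_irrefl 0 h1
    rw [ind, if_neg hd, zero_mul]
  · rw [extFun]
    split
    · next h =>
      have h0 : down z.1 i 0 = 0 := by
        rw [down, Function.update_of_ne (fun h0 => hi h0.symm)]
        exact hz
      rw [hu ⟨down z.1 i, h⟩ h0, mul_zero]
    · next h => rw [mul_zero]

lemma pow_pres (Q : En (n+1) →L[ℝ] En (n+1))
    (hQ : ∀ (u : En (n+1)) (x : Conf (n+1)), Q u x = Qact 1 0 (fun z => u z) x) :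
    ∀ (k : ℕ) (u : En (n+1)), (∀ z : Conf (n+1), z.1 0 = 0 → u z = 0) →
      ∀ z : Conf (n+1), z.1 0 = 0 → (Q ^ k) u z = 0 := by
  intro k
  induction k with
  | zero =>
    intro u hu z hz
    rw [pow_zero, ContinuousLinearMap.one_apply]
    exact hu z hz
  | succ k ih =>
    intro u hu z hz
    rw [pow_succ', ContinuousLinearMap.mul_apply]
    exact Qact_pres Q hQ ((Q ^ k) u) (fun z' hz' => ih u hu z' hz') z hz

lemma Rop_pres (Q : En (n+1) →L[ℝ] En (n+1)) {s : ℝ} (hs : ‖Q‖ < s)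
    (hQ : ∀ (u : En (n+1)) (x : Conf (n+1)), Q u x = Qact 1 0 (fun z => u z) x)
    (u : En (n+1)) (hu : ∀ z : Conf (n+1), z.1 0 = 0 → u z = 0) :
    ∀ z : Conf (n+1), z.1 0 = 0 → Rop Q s u z = 0 := by
  intro z hz
  have hsum : Summable (fun k : ℕ => (s⁻¹) ^ (k+1) • Q ^ k) := (hasSum_Lop Q hs).summable
  have hψ := ((evalCLM z).comp
    ((ContinuousLinearMap.apply ℝ (En (n+1))) u)).map_tsum hsum
  rw [Rop]
  rw [show ((∑' k : ℕ, (s⁻¹) ^ (k+1) • Q ^ k) u) z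
    = ((evalCLM z).comp ((ContinuousLinearMap.apply ℝ (En (n+1))) u))
        (∑' k : ℕ, (s⁻¹) ^ (k+1) • Q ^ k) from rfl, hψ]
  have hterm : (fun k : ℕ => ((evalCLM z).comp ((ContinuousLinearMap.apply ℝ (En (n+1))) u))
      ((s⁻¹) ^ (k+1) • Q ^ k)) = fun _ : ℕ => (0:ℝ) := by
    funext k
    show (((s⁻¹) ^ (k+1) • Q ^ k) u) z = 0
    rw [ContinuousLinearMap.smul_apply]
    have hcoe : ((s⁻¹) ^ (k+1) • ((Q ^ k) u)) z = (s⁻¹) ^ (k+1) • ((Q ^ k) u z) := by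
      rw [lp.coeFn_smul]
      rfl
    rw [hcoe, pow_pres Q hQ k u hu z hz, smul_zero]
  rw [hterm, tsum_zero]

/-- Compression to `ℓ¹(Xₙ⁺)` is multiplicative against operators preserving the invariant
subspace. -/
lemma compress_mul (S T : En (n+1) →L[ℝ] En (n+1))
    (hS : ∀ u : En (n+1), (∀ z : Conf (n+1), z.1 0 = 0 → u z = 0) →
      ∀ z : Conf (n+1), z.1 0 = 0 → S u z = 0) :
    piCLM.comp (S.comp (T.comp jCLM))
      = (piCLM.comp (S.comp jCLM)) * (piCLM.comp (T.comp jCLM)) := by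
  refine ContinuousLinearMap.ext fun u => ?_
  apply lp.ext
  funext x
  show (S (T (jCLM u))) (cons0 x) = (S (jCLM (piCLM (T (jCLM u))))) (cons0 x)
  set v := T (jCLM u) with hv
  have hw : ∀ z : Conf (n+1), z.1 0 = 0 → (v - jCLM (piCLM v)) z = 0 := by
    intro z hz
    rw [lp.coeFn_sub, Pi.sub_apply, jCLM_apply, jFun, dif_pos hz, piCLM_apply,
      cons0_tail0 z hz, sub_self]
  have h0 : (S (v - jCLM (piCLM v))) (cons0 x) = 0 := hS _ hw _ (cons0_val_zero x)
  rw [map_sub] at h0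
  rw [lp.coeFn_sub, Pi.sub_apply] at h0
  linarith [h0]

lemma j_single (y : ConfP n) :
    jCLM (lp.single 1 y (1:ℝ)) = lp.single 1 (cons0 y) (1:ℝ) := by
  apply lp.ext
  funext z
  rw [jCLM_apply]
  by_cases hzy : z = cons0 y
  · subst hzy
    rw [jFun, dif_pos (cons0_val_zero y), tail0_cons0, lp.single_apply_self,
      lp.single_apply_self]
  · rw [lp.single_apply_ne _ _ _ hzy, jFun]
    split
    · next hz =>
      have hty : tail0 z hz ≠ y := fun h => hzy (by rw [← cons0_tail0 z hz, h])
      rw [lp.single_apply_ne _ _ _ hty]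
    · next hz => rfl

end Pres


/-- **Remark 1.2** of Tracy–Widom.  In TASEP (`p = 1`, `q = 0`), for `α > 0` there is
`s₀ ≥ α` such that for all `s > s₀` the operator `I - α Lₙ⁰(s)` is boundedly invertible on
`ℓ¹(Xₙ⁺)` with `(I - α Lₙ⁰(s))⁻¹ = I + α Lₙ⁰(s - α)`, where `Lₙ⁰(s)` has kernel
`φ̂_{n+1}((0,x),(0,y);s)`. -/
theorem tasep_remark1_2 (n : ℕ) (α : ℝ) (hα : 0 < α)
    (Q : En (n+1) →L[ℝ] En (n+1))
    (hQ : ∀ (u : En (n+1)) (x : Conf (n+1)), Q u x = Qact 1 0 (fun z => u z) x) :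
    ∃ s₀ : ℝ, α ≤ s₀ ∧ ∀ s : ℝ, s₀ < s →
      -- the Bochner integrals defining L_{n+1}(s) and L_{n+1}(s-α) converge
      LapConv Q s ∧ LapConv Q (s - α) ∧
      -- the operators Lₙ⁰(s) and Lₙ⁰(s-α) on ℓ¹(Xₙ⁺)
      ∃ (L0s L0sα : Ep n →L[ℝ] Ep n),
        (∀ (y x : ConfP n),
          L0s (lp.single 1 y (1:ℝ)) x = Lop Q s (lp.single 1 (cons0 y) (1:ℝ)) (cons0 x)) ∧
        (∀ (y x : ConfP n),
          L0sα (lp.single 1 y (1:ℝ)) x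
            = Lop Q (s - α) (lp.single 1 (cons0 y) (1:ℝ)) (cons0 x)) ∧
        -- I - α Lₙ⁰(s) is boundedly invertible with inverse I + α Lₙ⁰(s-α)
        (1 - α • L0s) * (1 + α • L0sα) = 1 ∧ (1 + α • L0sα) * (1 - α • L0s) = 1 := by

  refine ⟨‖Q‖ + α, by linarith [norm_nonneg Q], fun s hs => ?_⟩
  have hs2 : ‖Q‖ < s - α := by linarith
  have hs1 : ‖Q‖ < s := by linarith
  refine ⟨lapConv_of_norm_lt Q hs1, lapConv_of_norm_lt Q hs2, ?_⟩
  set M : Ep n →L[ℝ] Ep n := piCLM.comp ((Rop Q s).comp jCLM) with hM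
  set N : Ep n →L[ℝ] Ep n := piCLM.comp ((Rop Q (s - α)).comp jCLM) with hN
  have hpres1 := Rop_pres Q hs1 hQ
  have hpres2 := Rop_pres Q hs2 hQ
  have hsc : (s - α) - s = -α := by ring
  have hR1 : Rop Q s - Rop Q (s - α) = (-α) • (Rop Q s * Rop Q (s - α)) := by
    rw [Rop_sub Q hs1 hs2, hsc]
  have hR2 : Rop Q s - Rop Q (s - α) = (-α) • (Rop Q (s - α) * Rop Q s) := by
    rw [Rop_sub' Q hs1 hs2, hsc]
  have hMN : M - N = (-α) • (M * N) := by
    calc M - N = piCLM.comp ((Rop Q s - Rop Q (s - α)).comp jCLM) := by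
          rw [hM, hN, ContinuousLinearMap.sub_comp, ContinuousLinearMap.comp_sub]
      _ = (-α) • (piCLM.comp (((Rop Q s).comp ((Rop Q (s - α)).comp jCLM)))) := by
          rw [hR1, ContinuousLinearMap.smul_comp, ContinuousLinearMap.comp_smul,
            ContinuousLinearMap.mul_def, ContinuousLinearMap.comp_assoc]
      _ = (-α) • (M * N) := by rw [compress_mul _ _ hpres1, hM, hN]
  have hNM : M - N = (-α) • (N * M) := by
    calc M - N = piCLM.comp ((Rop Q s - Rop Q (s - α)).comp jCLM) := by
          rw [hM, hN, ContinuousLinearMap.sub_comp, ContinuousLinearMap.comp_sub]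
      _ = (-α) • (piCLM.comp (((Rop Q (s - α)).comp ((Rop Q s).comp jCLM)))) := by
          rw [hR2, ContinuousLinearMap.smul_comp, ContinuousLinearMap.comp_smul,
            ContinuousLinearMap.mul_def, ContinuousLinearMap.comp_assoc]
      _ = (-α) • (N * M) := by rw [compress_mul _ _ hpres2, hM, hN]
  have key1 : α • N - α • M = (α * α) • (M * N) := by
    calc α • N - α • M = (-α) • (M - N) := by rw [neg_smul, smul_sub]; abel
      _ = (-α) • ((-α) • (M * N)) := by rw [hMN]
      _ = (α * α) • (M * N) := by rw [smul_smul, neg_mul_neg]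
  have key2 : α • N - α • M = (α * α) • (N * M) := by
    calc α • N - α • M = (-α) • (M - N) := by rw [neg_smul, smul_sub]; abel
      _ = (-α) • ((-α) • (N * M)) := by rw [hNM]
      _ = (α * α) • (N * M) := by rw [smul_smul, neg_mul_neg]
  refine ⟨M, N, fun y x => ?_, fun y x => ?_, ?_, ?_⟩
  · rw [← Rop_eq_Lop Q hs1, hM, ← j_single y]
    rfl
  · rw [← Rop_eq_Lop Q hs2, hN, ← j_single y]
    rfl
  · calc (1 - α • M) * (1 + α • N)
        = (1 + α • N) - (α • M + (α * α) • (M * N)) := by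
          rw [sub_mul, one_mul, mul_add, mul_one, smul_mul_assoc, mul_smul_comm, smul_smul]
      _ = 1 + (α • N - α • M) - (α * α) • (M * N) := by abel
      _ = 1 := by rw [key1]; abel
  · calc (1 + α • N) * (1 - α • M)
        = (1 - α • M) + (α • N - (α * α) • (N * M)) := by
          rw [add_mul, one_mul, mul_sub, mul_one, smul_mul_assoc, mul_smul_comm, smul_smul]
      _ = 1 + (α • N - α • M) - (α * α) • (N * M) := by abel
      _ = 1 := by rw [key2]; abel
end
end
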